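/- Let I be a representation-independent finitary inference procedure. Then for every finite type X, the X-inference procedure I_X is essentially entailment for every objective knowledge base in its domain; that is, if KB = {μ ∈ Δ_X : μ(T) = 1} for some T ⊆ X, KB ∈ dom(I_X), S ⊆ X, and α, β are reals with KB ⊢_{I_X} {μ : α < μ(S) < β}, then KB ⊆ {μ : α ≤ μ(S) ≤ β}. -/

import Mathlib

/-- A probability measure (probability mass function) on a finite type. -/
structure PM (X : Type) [Fintype X] where
  pm : X → ℝ
  nonneg : ∀ x, 0 ≤ pm x
  total : ∑ x, pm x = 1

namespace PM

variable {X Y : Type} [Fintype X] [Fintype Y]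

/-- The probability of a set `S`: `μ(S) = ∑_{x ∈ S} μ(x)`. -/
noncomputable def prob (μ : PM X) (S : Set X) : ℝ := ∑ x, S.indicator μ.pm x

lemma prob_nonneg (μ : PM X) (S : Set X) : 0 ≤ μ.prob S :=
  Finset.sum_nonneg fun x _ => Set.indicator_apply_nonneg fun _ => μ.nonneg x

/-- Marginal on the first component: `μ_X(A) = μ(A × Y)`. -/
noncomputable def margFst (μ : PM (X × Y)) : PM X where
  pm x := ∑ y, μ.pm (x, y)
  nonneg x := Finset.sum_nonneg fun y _ => μ.nonneg (x, y)
  total := by rw [← μ.total, ← Fintype.sum_prod_type]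

/-- Marginal on the second component: `μ_Y(B) = μ(X × B)`. -/
noncomputable def margSnd (μ : PM (X × Y)) : PM Y where
  pm y := ∑ x, μ.pm (x, y)
  nonneg y := Finset.sum_nonneg fun x _ => μ.nonneg (x, y)
  total := by rw [← μ.total, ← Fintype.sum_prod_type_right]

/-- Conditioning `μ|S`; the junk value `μ` is returned when `μ(S) = 0`. -/
noncomputable def cond (μ : PM X) (S : Set X) : PM X :=
  if h : 0 < μ.prob S then
    { pm := fun x => S.indicator μ.pm x / μ.prob S
      nonneg := fun x =>
        div_nonneg (Set.indicator_apply_nonneg fun _ => μ.nonneg x) (le_of_lt h)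
      total := by
        rw [← Finset.sum_div]
        exact div_self (ne_of_gt h) }
  else μ

end PM

open PM

/-- An `X`-inference procedure: a partial map on sets of probability measures. -/
structure InfProc (X : Type) [Fintype X] where
  dom : Set (Set (PM X))
  map : Set (PM X) → Set (PM X)
  map_subset : ∀ A ∈ dom, map A ⊆ A
  map_empty_iff : ∀ A ∈ dom, (map A = ∅ ↔ A = ∅)

/-- `KB ⊢_I θ`. -/
def Infers {X : Type} [Fintype X] (I : InfProc X) (KB θ : Set (PM X)) : Prop :=
  I.map KB ⊆ θ

section Lift

variable {X Y : Type} [Fintype X] [Fintype Y]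

/-- A constraint on `Δ_X` viewed as a constraint on `Δ_{X×Y}`: `KB↑`. -/
def liftKB (Y : Type) [Fintype Y] (KB : Set (PM X)) : Set (PM (X × Y)) :=
  {μ | margFst μ ∈ KB}

/-- `proj_X(B) = {μ_X : μ ∈ B}`. -/
def projFst (B : Set (PM (X × Y))) : Set (PM X) := margFst '' B

/-- `ψ ⊆ Δ_{X×Y}` is `X`-conservative over `KB ⊆ Δ_X`. -/
def Conservative (KB : Set (PM X)) (ψ : Set (PM (X × Y))) : Prop :=
  projFst (liftKB Y KB ∩ ψ) = KB

end Lift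

/-- Robustness of a finitary inference procedure. -/
def Robust (I : ∀ (X : Type) [Fintype X], InfProc X) : Prop :=
  ∀ (X Y : Type) [Fintype X] [Fintype Y], ∀ KB φ : Set (PM X),
    KB ∈ (I X).dom → ∀ ψ : Set (PM (X × Y)), Conservative KB ψ →
      (Infers (I X) KB φ ↔ Infers (I (X × Y)) (liftKB Y KB ∩ ψ) (liftKB Y φ))

/-- An inference procedure is essentially entailment. -/
def EssEntail {X : Type} [Fintype X] (I : InfProc X) : Prop :=
  ∀ KB ∈ I.dom, ∀ (S : Set X) (α β : ℝ),
    Infers I KB {μ | α < μ.prob S ∧ μ.prob S < β} →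
    KB ⊆ {μ | α ≤ μ.prob S ∧ μ.prob S ≤ β}

def DI1 (I : ∀ (X : Type) [Fintype X], InfProc X) : Prop :=
  ∀ (X : Type) [Fintype X], ∀ (S : Set X) (α β : ℝ), α ≤ β →
    {μ : PM X | α ≤ μ.prob S ∧ μ.prob S ≤ β} ∈ (I X).dom

def DI2 (I : ∀ (X : Type) [Fintype X], InfProc X) : Prop :=
  ∀ (X Y : Type) [Fintype X] [Fintype Y], ∀ KB : Set (PM X),
    KB ∈ (I X).dom → liftKB Y KB ∈ (I (X × Y)).dom

def DI3 (I : ∀ (X : Type) [Fintype X], InfProc X) : Prop :=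
  ∀ (X : Type) [Fintype X], ∀ KB₁ KB₂ : Set (PM X),
    KB₁ ∈ (I X).dom → KB₂ ∈ (I X).dom → KB₁ ∩ KB₂ ∈ (I X).dom

/-- An `X`-`Y` embedding: a homomorphism of set algebras. -/
structure Emb (X Y : Type) where
  f : Set X → Set Y
  map_union : ∀ S T, f (S ∪ T) = f S ∪ f T
  map_compl : ∀ S, f Sᶜ = (f S)ᶜ

/-- A faithful embedding. -/
def Emb.Faithful {X Y : Type} (e : Emb X Y) : Prop :=
  ∀ S T : Set X, S ⊆ T ↔ e.f S ⊆ e.f T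

section Embeddings

variable {X Y : Type} [Fintype X] [Fintype Y]

/-- `μ` and `ν` correspond under `f`. -/
def Corr (e : Emb X Y) (μ : PM X) (ν : PM Y) : Prop :=
  ∀ S : Set X, μ.prob S = ν.prob (e.f S)

/-- `f*(D)`, the union over `μ ∈ D` of the measures corresponding to `μ`. -/
def fstar (e : Emb X Y) (D : Set (PM X)) : Set (PM Y) :=
  {ν | ∃ μ ∈ D, Corr e μ ν}

/-- Sets of measures `D_X` and `D_Y` correspond under `f`. -/
def SetCorr (e : Emb X Y) (DX : Set (PM X)) (DY : Set (PM Y)) : Prop :=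
  (∀ ν ∈ DY, ∃ μ ∈ DX, Corr e μ ν) ∧ (∀ μ ∈ DX, ∃ ν ∈ DY, Corr e μ ν)

end Embeddings

/-- Representation independence of a finitary inference procedure. -/
def RepInd (I : ∀ (X : Type) [Fintype X], InfProc X) : Prop :=
  ∀ (X Y : Type) [Fintype X] [Fintype Y] (e : Emb X Y), e.Faithful →
    (∀ KB : Set (PM X), KB ∈ (I X).dom ↔ fstar e KB ∈ (I Y).dom) ∧
    (∀ KB : Set (PM X), KB ∈ (I X).dom → ∀ θ : Set (PM X),
      (Infers (I X) KB θ ↔ Infers (I Y) (fstar e KB) (fstar e θ)))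

def DI4 (I : ∀ (X : Type) [Fintype X], InfProc X) : Prop :=
  ∀ (X Y : Type) [Fintype X] [Fintype Y] (e : Emb X Y), e.Faithful →
    ∀ KB : Set (PM X), (KB ∈ (I X).dom ↔ fstar e KB ∈ (I Y).dom)

/-- `A ⇔ B` for sets of measures. -/
def iffSet {α : Type*} (A B : Set α) : Set α := (A ∩ B) ∪ (Aᶜ ∩ Bᶜ)

def DI5 (I : ∀ (X : Type) [Fintype X], InfProc X) : Prop :=
  ∀ (X Y : Type) [Fintype X] [Fintype Y] (KB : Set (PM (X × Y))) (e : Emb X Y),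
    e.Faithful → KB ∈ (I (X × Y)).dom → ∀ φ₁ : Set (PM X),
      KB ∩ iffSet (liftKB Y φ₁) {μ | margSnd μ ∈ fstar e φ₁} ∈ (I (X × Y)).dom

/-- Minimal default independence. -/
def MDI (I : ∀ (X : Type) [Fintype X], InfProc X) : Prop :=
  ∀ (X Y : Type) [Fintype X] [Fintype Y], ∀ KB : Set (PM X), ∀ (S : Set X) (T : Set Y),
    liftKB Y KB ∈ (I (X × Y)).dom →
    Infers (I (X × Y)) (liftKB Y KB)
      {μ | μ.prob (S ×ˢ T) = μ.prob (S ×ˢ (Set.univ : Set Y)) * μ.prob ((Set.univ : Set X) ×ˢ T)}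

/-- `KB` depends only on `S₁, …, S_k`. -/
def DependsOnly {X : Type} [Fintype X] {k : ℕ} (KB : Set (PM X)) (S : Fin k → Set X) : Prop :=
  ∀ μ μ' : PM X, (∀ i, μ.prob (S i) = μ'.prob (S i)) → (μ ∈ KB ↔ μ' ∈ KB)

/-- An atom over `S₁, …, S_k`. -/
def Atom {X : Type} {k : ℕ} (S : Fin k → Set X) (c : Fin k → Bool) : Set X :=
  ⋂ i, (if c i then S i else (S i)ᶜ)

section KL

variable {X : Type} [Fintype X]

/-- Absolute continuity of pmfs. -/
def AbsCont (μ' μ : PM X) : Prop := ∀ x, μ.pm x = 0 → μ'.pm x = 0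

/-- Relative entropy `D(μ'‖μ) ∈ [0,∞]` (it is `⊤` unless `μ' ≪ μ`). -/
noncomputable def KL (μ' μ : PM X) : EReal := by
  classical
  exact if AbsCont μ' μ then
    ((∑ x, μ'.pm x * Real.log (μ'.pm x / μ.pm x) : ℝ) : EReal)
  else ⊤

/-- The relative-entropy projection `μ|θ`. -/
def klProj (μ : PM X) (θ : Set (PM X)) : Set (PM X) :=
  {μ' | μ' ∈ θ ∧ KL μ' μ ≠ ⊤ ∧ ∀ μ'' ∈ θ, KL μ' μ ≤ KL μ'' μ}

/-- `D|θ = ⋃_{μ ∈ D} μ|θ`. -/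
def DProj (D : Set (PM X)) (θ : Set (PM X)) : Set (PM X) :=
  ⋃ μ ∈ D, klProj μ θ

end KL

section Products

variable {n : ℕ} {X : Fin n → Type} [∀ i, Fintype (X i)]

/-- The `i`-th marginal of a measure on a finite product. -/
noncomputable def margPi (μ : PM (∀ i, X i)) (i : Fin n) : PM (X i) where
  pm a := μ.prob {x | x i = a}
  nonneg a := PM.prob_nonneg _ _
  total := by
    classical
    unfold PM.prob
    rw [Finset.sum_comm]
    have h : ∀ x : (∀ i, X i),
        (∑ a, ({y : ∀ j, X j | y i = a}).indicator μ.pm x) = μ.pm x := by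
      intro x
      simp [Set.indicator_apply]
    simp only [h]
    exact μ.total

/-- `μ` is a product measure on `X₁ × ⋯ × Xₙ`. -/
def IsProdPM (μ : PM (∀ i, X i)) : Prop :=
  ∃ μi : ∀ i, PM (X i), ∀ U : ∀ i, Set (X i),
    μ.prob {x | ∀ i, x i ∈ U i} = ∏ i, (μi i).prob (U i)

end Products

/-- The set `P_Π(X)` of product measures. -/
def PPi {n : ℕ} (X : Fin n → Type) [∀ i, Fintype (X i)] : Set (PM (∀ i, X i)) :=
  {μ | IsProdPM μ}

/-- `e` is a product embedding. -/
def IsProdEmb {n : ℕ} {X Y : Fin n → Type} (e : Emb (∀ i, X i) (∀ i, Y i)) : Prop :=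
  ∃ ei : ∀ i, Emb (X i) (Y i), ∀ S : Set (∀ i, X i),
    e.f S = ⋃ x ∈ S, {y | ∀ i, y i ∈ (ei i).f {x i}}


namespace Stmt7Aux

open PM Finset
open scoped Classical

variable {X Y : Type} [Fintype X] [Fintype Y]

lemma prob_univ (μ : PM X) : μ.prob Set.univ = 1 := by
  simp [PM.prob, μ.total]

lemma prob_empty (μ : PM X) : μ.prob (∅ : Set X) = 0 := by
  simp [PM.prob]

lemma prob_mono (μ : PM X) {S T : Set X} (h : S ⊆ T) : μ.prob S ≤ μ.prob T :=
  Finset.sum_le_sum fun x _ =>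
    Set.indicator_le_indicator_of_subset h (fun a => μ.nonneg a) x

lemma prob_le_one (μ : PM X) (S : Set X) : μ.prob S ≤ 1 := by
  have := prob_mono μ (Set.subset_univ S)
  rwa [prob_univ] at this

lemma prob_union (μ : PM X) {S T : Set X} (h : Disjoint S T) :
    μ.prob (S ∪ T) = μ.prob S + μ.prob T := by
  simp only [PM.prob, Set.indicator_union_of_disjoint h, Pi.add_apply,
    Finset.sum_add_distrib]

lemma prob_compl (μ : PM X) (S : Set X) : μ.prob Sᶜ = 1 - μ.prob S := by
  have h := prob_union μ (disjoint_compl_right (a := S))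
  rw [Set.union_compl_self, prob_univ] at h
  linarith

lemma prob_eq_zero (μ : PM X) {A B : Set X} (hAB : A ⊆ B) (hB : μ.prob B = 0) :
    μ.prob A = 0 :=
  le_antisymm (hB ▸ prob_mono μ hAB) (μ.prob_nonneg A)

lemma prob_inter (μ : PM X) {T : Set X} (hT : μ.prob T = 1) (S : Set X) :
    μ.prob S = μ.prob (S ∩ T) := by
  have hTc : μ.prob Tᶜ = 0 := by rw [prob_compl, hT]; ring
  have h2 : μ.prob (S ∩ Tᶜ) = 0 := prob_eq_zero μ Set.inter_subset_right hTc
  have hd : Disjoint (S ∩ T) (S ∩ Tᶜ) :=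
    (disjoint_compl_right (a := T)).mono Set.inter_subset_right Set.inter_subset_right
  have h3 := prob_union μ hd
  rw [Set.inter_union_compl] at h3
  rw [h3, h2, add_zero]

lemma prob_singleton (μ : PM X) (x : X) : μ.prob {x} = μ.pm x := by
  classical
  simp [PM.prob, Set.indicator_apply, Finset.sum_ite_eq' Finset.univ x μ.pm]

lemma pm_ext {μ ν : PM X} (h : ∀ S : Set X, μ.prob S = ν.prob S) : μ = ν := by
  cases μ with | mk p hn ht =>
  cases ν with | mk q hn' ht' =>
  simp only [PM.mk.injEq]
  funext x
  have := h {x}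
  simpa [prob_singleton] using this

noncomputable def push (g : Y → X) (ν : PM Y) : PM X where
  pm x := ∑ y, if g y = x then ν.pm y else 0
  nonneg x := Finset.sum_nonneg fun y _ => by
    split_ifs
    · exact ν.nonneg y
    · exact le_refl 0
  total := by
    classical
    rw [Finset.sum_comm]
    simp [Finset.sum_ite_eq, ν.total]

lemma prob_push (g : Y → X) (ν : PM Y) (S : Set X) :
    (push g ν).prob S = ν.prob (g ⁻¹' S) := by
  classical
  have h1 : (push g ν).prob S
      = ∑ x, ∑ y, (if g y = x then (if x ∈ S then ν.pm y else 0) else 0) := by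
    apply Finset.sum_congr rfl
    intro x _
    rw [Set.indicator_apply]
    split_ifs with h
    · show (∑ y, if g y = x then ν.pm y else 0) = _
      exact Finset.sum_congr rfl fun y _ => by simp [h]
    · simp [h]
  rw [h1, Finset.sum_comm]
  apply Finset.sum_congr rfl
  intro y _
  rw [Finset.sum_ite_eq Finset.univ (g y) (fun x => if x ∈ S then ν.pm y else 0)]
  simp [Set.indicator_apply, Set.mem_preimage]

def embOf (g : Y → X) : Emb X Y where
  f S := g ⁻¹' S
  map_union S T := Set.preimage_union
  map_compl S := Set.preimage_compl

lemma embOf_faithful {g : Y → X} (hg : Function.Surjective g) :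
    (embOf g).Faithful := by
  intro S T
  constructor
  · exact fun h => Set.preimage_mono h
  · intro h x hx
    obtain ⟨y, rfl⟩ := hg x
    exact h hx

lemma corr_embOf (g : Y → X) (μ : PM X) (ν : PM Y) :
    Corr (embOf g) μ ν ↔ μ = push g ν := by
  constructor
  · intro h
    apply pm_ext
    intro S
    rw [prob_push]
    exact h S
  · rintro rfl S
    rw [prob_push]
    rfl

lemma fstar_embOf (g : Y → X) (D : Set (PM X)) :
    fstar (embOf g) D = {ν | push g ν ∈ D} := by
  ext ν
  simp only [fstar, Set.mem_setOf_eq, corr_embOf]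
  constructor
  · rintro ⟨μ, hμ, rfl⟩; exact hμ
  · intro h; exact ⟨_, h, rfl⟩

end Stmt7Aux
namespace Stmt7Aux
open PM Finset
open scoped Classical

lemma key (I : ∀ (X : Type) [Fintype X], InfProc X) (hri : RepInd I)
    {X : Type} [Fintype X] (T S : Set X)
    (hdom : {μ : PM X | μ.prob T = 1} ∈ (I X).dom)
    (α β : ℝ)
    (hinf : Infers (I X) {μ : PM X | μ.prob T = 1}
      {μ : PM X | α < μ.prob S ∧ μ.prob S < β})
    (μstar : PM X) (hμstar : μstar.prob T = 1)
    (s₀ : X) (hs₀ : s₀ ∈ S ∩ T) (t₀ : X) (ht₀ : t₀ ∈ T \ S)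
    (m r : ℕ) (hr : 1 ≤ r) (hrm : r < m) :
    (m : ℝ) * α < r ∧ (r : ℝ) < m * β := by
  classical
  haveI : NeZero m := ⟨by omega⟩
  set KB : Set (PM X) := {μ | μ.prob T = 1} with hKBdef
  set g : Fin m → (X × Fin m) → X := fun i p =>
    if p.1 ∈ T then
      (if (p.2 - i).val < r then (if p.1 ∈ S then p.1 else s₀)
       else (if p.1 ∈ S then t₀ else p.1))
    else p.1 with hgdef
  have hsurj : ∀ i, Function.Surjective (g i) := by
    intro i x
    by_cases hxT : x ∈ T
    · by_cases hxS : x ∈ S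
      · refine ⟨(x, i), ?_⟩
        simp only [hgdef]
        rw [if_pos hxT, sub_self, if_pos (show ((0 : Fin m)).val < r by simp; omega),
          if_pos hxS]
      · refine ⟨(x, i + ⟨r, hrm⟩), ?_⟩
        simp [hgdef, hxT, hxS, add_sub_cancel_left]
    · exact ⟨(x, i), by simp [hgdef, hxT]⟩
  have hgT : ∀ i, g i ⁻¹' T = T ×ˢ (Set.univ : Set (Fin m)) := by
    intro i
    ext ⟨x, j⟩
    simp only [Set.mem_preimage, Set.mem_prod, Set.mem_univ, and_true, hgdef]
    by_cases hxT : x ∈ T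
    · simp only [if_pos hxT]
      split_ifs <;> simp [hxT, hs₀.2, ht₀.1]
    · simp [hxT]
  set C : Fin m → Set (Fin m) := fun i => {j | (j - i).val < r} with hCdef
  have hgS : ∀ i, g i ⁻¹' S
      = (T ×ˢ C i) ∪ ((S \ T) ×ˢ (Set.univ : Set (Fin m))) := by
    intro i
    ext ⟨x, j⟩
    simp only [Set.mem_preimage, Set.mem_union, Set.mem_prod, Set.mem_setOf_eq,
      Set.mem_diff, Set.mem_univ, and_true, hgdef, hCdef]
    by_cases hxT : x ∈ T
    · simp only [if_pos hxT]
      by_cases hj : (j - i).val < r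
      · simp only [if_pos hj]
        split_ifs with hxS
        · simp [hxS, hxT, hj]
        · simp [hs₀.1, hxT, hj]
      · simp only [if_neg hj]
        split_ifs with hxS
        · simp [ht₀.2, hxT, hj]
        · simp [hxS, hxT, hj]
    · simp [hxT]
  set KB' : Set (PM (X × Fin m)) :=
    {ν | ν.prob (T ×ˢ (Set.univ : Set (Fin m))) = 1} with hKB'def
  have hfstarKB : ∀ i, fstar (embOf (g i)) KB = KB' := by
    intro i
    rw [fstar_embOf]
    ext ν
    simp only [hKBdef, hKB'def, Set.mem_setOf_eq, prob_push, hgT i]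
  have hdom' : KB' ∈ (I (X × Fin m)).dom := by
    have h := (hri X (X × Fin m) (embOf (g 0)) (embOf_faithful (hsurj 0))).1 KB
    rw [hfstarKB 0] at h
    exact h.mp hdom
  -- a witness measure in KB'
  set νs : PM (X × Fin m) :=
    { pm := fun p => if p.2 = 0 then μstar.pm p.1 else 0
      nonneg := fun p => by
        show 0 ≤ (if p.2 = 0 then μstar.pm p.1 else 0)
        split_ifs
        · exact μstar.nonneg _
        · exact le_refl 0
      total := by
        rw [Fintype.sum_prod_type]
        have : ∀ x : X, (∑ j : Fin m, if j = 0 then μstar.pm x else 0) = μstar.pm x := by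
          intro x
          rw [Finset.sum_ite_eq' Finset.univ (0 : Fin m) (fun _ => μstar.pm x)]
          simp
        simp only [this]
        exact μstar.total } with hνsdef
  have hνs : νs ∈ KB' := by
    show νs.prob _ = 1
    have : νs.prob (T ×ˢ (Set.univ : Set (Fin m))) = μstar.prob T := by
      rw [PM.prob, PM.prob, Fintype.sum_prod_type]
      apply Finset.sum_congr rfl
      intro x _
      by_cases hxT : x ∈ T
      · rw [Set.indicator_of_mem hxT]
        have hj : ∀ j : Fin m, (T ×ˢ (Set.univ : Set (Fin m))).indicator νs.pm (x, j)
            = if j = 0 then μstar.pm x else 0 := by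
          intro j
          rw [Set.indicator_of_mem (by simp [hxT])]
        simp only [hj]
        rw [Finset.sum_ite_eq' Finset.univ (0 : Fin m) (fun _ => μstar.pm x)]
        simp
      · rw [Set.indicator_of_notMem hxT]
        apply Finset.sum_eq_zero
        intro j _
        rw [Set.indicator_of_notMem (by simp [hxT])]
    rw [this, hμstar]
  have hmapne : ((I (X × Fin m)).map KB').Nonempty := by
    rw [Set.nonempty_iff_ne_empty]
    intro h
    have h2 := ((I (X × Fin m)).map_empty_iff KB' hdom').mp h
    rw [h2] at hνs
    exact hνs
  obtain ⟨ν₀, hν₀⟩ := hmapne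
  have hν₀KB' : ν₀.prob (T ×ˢ (Set.univ : Set (Fin m))) = 1 :=
    (I (X × Fin m)).map_subset KB' hdom' hν₀
  have hbound : ∀ i, α < ν₀.prob (T ×ˢ C i) ∧ ν₀.prob (T ×ˢ C i) < β := by
    intro i
    have h2 := ((hri X (X × Fin m) (embOf (g i)) (embOf_faithful (hsurj i))).2 KB hdom
      {μ | α < μ.prob S ∧ μ.prob S < β}).mp hinf
    rw [hfstarKB i, fstar_embOf] at h2
    have h3 := h2 hν₀
    simp only [Set.mem_setOf_eq, prob_push, hgS i] at h3
    have hz : ν₀.prob ((S \ T) ×ˢ (Set.univ : Set (Fin m))) = 0 := by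
      apply prob_eq_zero ν₀ (B := (T ×ˢ (Set.univ : Set (Fin m)))ᶜ)
      · rintro ⟨x, j⟩ ⟨hxS, -⟩
        simp only [Set.mem_compl_iff, Set.mem_prod, Set.mem_univ, and_true]
        exact hxS.2
      · rw [prob_compl, hν₀KB']
        ring
    have hd : Disjoint (T ×ˢ C i) ((S \ T) ×ˢ (Set.univ : Set (Fin m))) := by
      rw [Set.disjoint_left]
      rintro ⟨x, j⟩ ⟨hx, -⟩ ⟨hx2, -⟩
      exact hx2.2 hx
    rw [prob_union ν₀ hd, hz, add_zero] at h3
    exact h3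
  have hcount : ∀ j : Fin m,
      (∑ i : Fin m, if (j - i).val < r then (1 : ℝ) else 0) = r := by
    intro j
    rw [Fintype.sum_equiv (Equiv.subLeft j)
      (fun i : Fin m => if (j - i).val < r then (1 : ℝ) else 0)
      (fun c : Fin m => if (c : Fin m).val < r then (1 : ℝ) else 0)
      (fun i => by simp)]
    rw [Fin.sum_univ_eq_sum_range (fun k => if k < r then (1 : ℝ) else 0) m]
    have hfil : (Finset.range m).filter (fun k => k < r) = Finset.range r := by
      ext k
      simp only [Finset.mem_filter, Finset.mem_range]
      omega
    rw [← Finset.sum_filter, hfil, Finset.sum_const, Finset.card_range]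
    simp
  have hsum : ∑ i : Fin m, ν₀.prob (T ×ˢ C i) = r := by
    have step : ∀ y : X × Fin m,
        (∑ i : Fin m, (T ×ˢ C i).indicator ν₀.pm y)
          = (r : ℝ) * (T ×ˢ (Set.univ : Set (Fin m))).indicator ν₀.pm y := by
      rintro ⟨x, j⟩
      by_cases hxT : x ∈ T
      · rw [Set.indicator_of_mem (by simp [hxT])]
        have hterm : ∀ i : Fin m, (T ×ˢ C i).indicator ν₀.pm (x, j)
            = (if (j - i).val < r then (1 : ℝ) else 0) * ν₀.pm (x, j) := by
          intro i
          by_cases hji : (j - i).val < r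
          · rw [Set.indicator_of_mem (by simp [hxT, hCdef, hji])]
            simp [hji]
          · rw [Set.indicator_of_notMem (by simp [hxT, hCdef, hji])]
            simp [hji]
        simp only [hterm]
        rw [← Finset.sum_mul, hcount j]
      · have hterm : ∀ i : Fin m, (T ×ˢ C i).indicator ν₀.pm (x, j) = 0 := by
          intro i
          rw [Set.indicator_of_notMem (by simp [hxT])]
        simp only [hterm]
        rw [Set.indicator_of_notMem (by simp [hxT])]
        simp
    calc ∑ i : Fin m, ν₀.prob (T ×ˢ C i)
        = ∑ i : Fin m, ∑ y, (T ×ˢ C i).indicator ν₀.pm y := rfl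
      _ = ∑ y, ∑ i : Fin m, (T ×ˢ C i).indicator ν₀.pm y := Finset.sum_comm
      _ = ∑ y, (r : ℝ) * (T ×ˢ (Set.univ : Set (Fin m))).indicator ν₀.pm y := by
          exact Finset.sum_congr rfl fun y _ => step y
      _ = (r : ℝ) * ν₀.prob (T ×ˢ (Set.univ : Set (Fin m))) := by
          rw [← Finset.mul_sum]; rfl
      _ = r := by rw [hν₀KB', mul_one]
  haveI : Nonempty (Fin m) := ⟨0⟩
  constructor
  · have h := Finset.sum_lt_sum_of_nonempty (Finset.univ_nonempty)
      (fun i (_ : i ∈ Finset.univ) => (hbound i).1)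
    rw [hsum, Finset.sum_const, Finset.card_univ, Fintype.card_fin,
      nsmul_eq_mul] at h
    exact h
  · have h := Finset.sum_lt_sum_of_nonempty (Finset.univ_nonempty)
      (fun i (_ : i ∈ Finset.univ) => (hbound i).2)
    rw [hsum, Finset.sum_const, Finset.card_univ, Fintype.card_fin,
      nsmul_eq_mul] at h
    exact h

end Stmt7Aux
/-- a representation-independent finitary inference procedure is
essentially entailment on every objective knowledge base in its domain. -/
theorem stmt7 (I : ∀ (X : Type) [Fintype X], InfProc X) (hri : RepInd I)
    (X : Type) [Fintype X] (T S : Set X) (KB : Set (PM X))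
    (hKB : KB = {μ : PM X | μ.prob T = 1}) (hdom : KB ∈ (I X).dom)
    (α β : ℝ)
    (hinf : Infers (I X) KB {μ : PM X | α < μ.prob S ∧ μ.prob S < β}) :
    KB ⊆ {μ : PM X | α ≤ μ.prob S ∧ μ.prob S ≤ β} := by
  classical
  open Stmt7Aux in
  subst hKB
  intro μ hμ
  have hμT : μ.prob T = 1 := hμ
  -- the inference map is nonempty, giving a measure ρ with α < ρ(S) < β
  have hmapne : ((I X).map {μ : PM X | μ.prob T = 1}).Nonempty := by
    rw [Set.nonempty_iff_ne_empty]
    intro h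
    have h2 := ((I X).map_empty_iff _ hdom).mp h
    rw [h2] at hμ
    exact hμ
  obtain ⟨ρ, hρ⟩ := hmapne
  have hρT : ρ.prob T = 1 := (I X).map_subset _ hdom hρ
  have hρθ : α < ρ.prob S ∧ ρ.prob S < β := hinf hρ
  have h0ρ : 0 ≤ ρ.prob S := ρ.prob_nonneg S
  have h1ρ : ρ.prob S ≤ 1 := Stmt7Aux.prob_le_one ρ S
  by_cases hST : S ∩ T = ∅
  · -- every measure in KB gives S probability 0
    have hall : ∀ ν : PM X, ν.prob T = 1 → ν.prob S = 0 := by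
      intro ν hν
      rw [Stmt7Aux.prob_inter ν hν S, hST, Stmt7Aux.prob_empty]
    have h0 : μ.prob S = 0 := hall μ hμT
    have hρ0 : ρ.prob S = 0 := hall ρ hρT
    rw [hρ0] at hρθ
    constructor
    · rw [h0]; exact le_of_lt hρθ.1
    · rw [h0]; exact le_of_lt hρθ.2
  by_cases hTS : T \ S = ∅
  · -- every measure in KB gives S probability 1
    have hsub : T ⊆ S := Set.diff_eq_empty.mp hTS
    have hall : ∀ ν : PM X, ν.prob T = 1 → ν.prob S = 1 := by
      intro ν hν
      rw [Stmt7Aux.prob_inter ν hν S, Set.inter_eq_self_of_subset_right hsub, hν]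
    have h0 : μ.prob S = 1 := hall μ hμT
    have hρ0 : ρ.prob S = 1 := hall ρ hρT
    rw [hρ0] at hρθ
    constructor
    · rw [h0]; exact le_of_lt hρθ.1
    · rw [h0]; exact le_of_lt hρθ.2
  obtain ⟨s₀, hs₀⟩ := Set.nonempty_iff_ne_empty.mpr hST
  obtain ⟨t₀, ht₀⟩ := Set.nonempty_iff_ne_empty.mpr hTS
  by_cases hβ : β < 1
  · exfalso
    have hβ0 : 0 < β := lt_of_le_of_lt h0ρ hρθ.2
    obtain ⟨n, hn⟩ := exists_nat_gt (1 / (1 - β))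
    have h1β : (0 : ℝ) < 1 - β := by linarith
    have hinv : (1 : ℝ) < 1 / (1 - β) := by
      rw [lt_div_iff₀ h1β]; nlinarith
    have hn1 : (1 : ℝ) < (n : ℝ) := lt_trans hinv hn
    have hn2 : 2 ≤ n := by exact_mod_cast Nat.succ_le_of_lt (by exact_mod_cast hn1)
    have hk := Stmt7Aux.key I hri T S hdom α β hinf μ hμT s₀ hs₀ t₀ ht₀
      n (n - 1) (by omega) (by omega)
    have hcast : ((n - 1 : ℕ) : ℝ) = (n : ℝ) - 1 := by
      rw [Nat.cast_sub (by omega)]; simp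
    rw [hcast] at hk
    -- from hk.2 : n - 1 < n * β, i.e. n * (1 - β) < 1; from hn : n > 1/(1-β), n*(1-β) > 1
    have hgt : (1 : ℝ) < (n : ℝ) * (1 - β) := by
      rw [div_lt_iff₀ h1β] at hn
      linarith
    nlinarith [hk.2]
  by_cases hα : 0 < α
  · exfalso
    have hα1 : α < 1 := lt_of_lt_of_le hρθ.1 h1ρ
    obtain ⟨n, hn⟩ := exists_nat_gt (1 / α)
    have hinv : (1 : ℝ) < 1 / α := by
      rw [lt_div_iff₀ hα]; nlinarith
    have hn1 : (1 : ℝ) < (n : ℝ) := lt_trans hinv hn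
    have hn2 : 2 ≤ n := by exact_mod_cast Nat.succ_le_of_lt (by exact_mod_cast hn1)
    have hk := Stmt7Aux.key I hri T S hdom α β hinf μ hμT s₀ hs₀ t₀ ht₀
      n 1 (le_refl 1) (by omega)
    have hgt : (1 : ℝ) < (n : ℝ) * α := by
      rw [div_lt_iff₀ hα] at hn
      linarith
    have := hk.1
    simp only [Nat.cast_one] at this
    linarith
  push_neg at hβ hα
  exact ⟨le_trans hα (μ.prob_nonneg S), le_trans (Stmt7Aux.prob_le_one μ S) hβ⟩
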